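/- In an image-finite LTS with reflexive silent steps, if every PHMLU formula true in p is true in q, then p is directed branching bisimilar to q. -/

import Mathlib

variable {X A : Type*}

/-- Formulas of Hennessy-Milner Logic with Until. `none` is the silent action τ. -/
inductive HMLU (A : Type*) where
  | top : HMLU A
  | neg : HMLU A → HMLU A
  | and : HMLU A → HMLU A → HMLU A
  | dia : HMLU A → Option A → HMLU A → HMLU A

/-- Satisfaction: `p ⊨ δ⟨α⟩ψ` iff there is a τ-path from `p` along which every state
satisfies `δ`, ending in a state that `α`-steps to a state satisfying `ψ`. -/
def Sat (step : Option A → X → X → Prop) : HMLU A → X → Prop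
  | .top, _ => True
  | .neg φ, p => ¬ Sat step φ p
  | .and φ ψ, p => Sat step φ p ∧ Sat step ψ p
  | .dia δ α ψ, p => ∃ p' p'', Sat step δ p ∧
      Relation.ReflTransGen (fun x y => step none x y ∧ Sat step δ y) p p' ∧
      step α p' p'' ∧ Sat step ψ p''

mutual
  /-- Positive HMLU formulas. -/
  inductive Positive : HMLU A → Prop
    | top : Positive .top
    | neg {φ : HMLU A} : Negative φ → Positive (.neg φ)
    | and {φ ψ : HMLU A} : Positive φ → Positive ψ → Positive (.and φ ψ)
    | dia {δ ψ : HMLU A} {α : Option A} : Positive δ → Positive (.dia δ α ψ)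
  /-- Negative HMLU formulas. -/
  inductive Negative : HMLU A → Prop
    | top : Negative .top
    | neg {φ : HMLU A} : Positive φ → Negative (.neg φ)
    | and {φ ψ : HMLU A} : Negative φ → Negative ψ → Negative (.and φ ψ)
end

/-- Good formulas: every diamond subformula has a positive left-hand side. -/
inductive Good : HMLU A → Prop
  | top : Good .top
  | neg {φ : HMLU A} : Good φ → Good (.neg φ)
  | and {φ ψ : HMLU A} : Good φ → Good ψ → Good (.and φ ψ)
  | dia {δ ψ : HMLU A} {α : Option A} : Positive δ → Good δ → Good ψ → Good (.dia δ α ψ)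
/-- Formulas of Positive Hennessy-Milner Logic with Until. -/
inductive PHMLU (A : Type*) where
  | top : PHMLU A
  | bot : PHMLU A
  | and : PHMLU A → PHMLU A → PHMLU A
  | or : PHMLU A → PHMLU A → PHMLU A
  | dia : PHMLU A → Option A → PHMLU A → PHMLU A → PHMLU A

/-- The embedding of PHMLU into HMLU (`⊥ := ¬⊤`, `∨` by De Morgan,
`δ⟨α⟩(ψ⁺ ∧ ¬ψ⁻)` as a diamond with a conjunction on the right). -/
def PHMLU.toHMLU : PHMLU A → HMLU A
  | .top => .top
  | .bot => .neg .top
  | .and φ ψ => .and φ.toHMLU ψ.toHMLU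
  | .or φ ψ => .neg (.and (.neg φ.toHMLU) (.neg ψ.toHMLU))
  | .dia δ α ψp ψn => .dia δ.toHMLU α (.and ψp.toHMLU (.neg ψn.toHMLU))
/-- `R` is a directed branching bisimulation. -/
def IsDBBisim (step : Option A → X → X → Prop) (R : X → X → Prop) : Prop :=
  ∀ (α : Option A) (p p' q : X), R p q → step α p p' →
    ∃ q' q'', Relation.ReflTransGen (step none) q q' ∧ step α q' q'' ∧
      R p q' ∧ R p' q'' ∧ R q'' p'

/-- Directed branching bisimilarity. -/
def DBBisim (step : Option A → X → X → Prop) (p q : X) : Prop :=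
  ∃ R : X → X → Prop, IsDBBisim step R ∧ R p q

/-- Finite conjunction of PHMLU formulas. -/
def conjL : List (PHMLU A) → PHMLU A
  | [] => .top
  | φ :: l => .and φ (conjL l)

/-- Finite disjunction of PHMLU formulas. -/
def disjL : List (PHMLU A) → PHMLU A
  | [] => .bot
  | φ :: l => .or φ (disjL l)

lemma sat_conjL (step : Option A → X → X → Prop) (l : List (PHMLU A)) (p : X) :
    Sat step (conjL l).toHMLU p ↔ ∀ φ ∈ l, Sat step φ.toHMLU p := by
  induction l with
  | nil => simp [conjL, PHMLU.toHMLU, Sat]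
  | cons φ l ih => simp [conjL, PHMLU.toHMLU, Sat, ih]

lemma sat_disjL (step : Option A → X → X → Prop) (l : List (PHMLU A)) (p : X) :
    Sat step (disjL l).toHMLU p ↔ ∃ φ ∈ l, Sat step φ.toHMLU p := by
  induction l with
  | nil => simp [disjL, PHMLU.toHMLU, Sat]
  | cons φ l ih =>
    simp only [disjL, PHMLU.toHMLU, Sat, ih, List.mem_cons]
    constructor
    · intro hx
      rcases Classical.em (Sat step φ.toHMLU p) with hs | hs
      · exact ⟨φ, Or.inl rfl, hs⟩
      · rcases Classical.em (∃ ψ ∈ l, Sat step ψ.toHMLU p) with he | he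
        · obtain ⟨ψ, hψ, hsψ⟩ := he; exact ⟨ψ, Or.inr hψ, hsψ⟩
        · exact absurd ⟨hs, he⟩ hx
    · rintro ⟨ψ, hψ | hψ, hsψ⟩ ⟨h1, h2⟩
      · exact h1 (hψ ▸ hsψ)
      · exact h2 ⟨ψ, hψ, hsψ⟩

lemma last_sat {r : X → X → Prop} {P : X → Prop} {a b : X}
    (hpath : Relation.ReflTransGen (fun x y => r x y ∧ P y) a b) (ha : P a) : P b := by
  induction hpath with
  | refl => exact ha
  | tail _ hstep ih => exact hstep.2

theorem phmlu_theory_subset_gives_dbBisim (step : Option A → X → X → Prop)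
    (htau : ∀ p : X, step none p p)
    (hfin : ∀ (α : Option A) (q : X),
      {x : X × X | Relation.ReflTransGen (step none) q x.1 ∧ step α x.1 x.2}.Finite)
    (hfin' : ∀ (α : Option A) (q : X), {q' : X | step α q q'}.Finite)
    (p q : X) (h : ∀ φ : PHMLU A, Sat step φ.toHMLU p → Sat step φ.toHMLU q) :
    DBBisim step p q := by
  classical
  refine ⟨fun a b => ∀ φ : PHMLU A, Sat step φ.toHMLU a → Sat step φ.toHMLU b, ?_, h⟩
  intro α p p' q hR hstep
  by_contra hcon
  push_neg at hcon
  -- For each candidate pair, choose a distinguishing triple of formulas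
  have key : ∀ x : X × X, ∃ t : PHMLU A × PHMLU A × PHMLU A,
      (Relation.ReflTransGen (step none) q x.1 ∧ step α x.1 x.2) →
      Sat step t.1.toHMLU p ∧ Sat step t.2.1.toHMLU p' ∧ ¬ Sat step t.2.2.toHMLU p' ∧
      ¬ (Sat step t.1.toHMLU x.1 ∧ Sat step t.2.1.toHMLU x.2 ∧
          ¬ Sat step t.2.2.toHMLU x.2) := by
    intro x
    by_cases hx : Relation.ReflTransGen (step none) q x.1 ∧ step α x.1 x.2
    · have hne := hcon x.1 x.2 hx.1 hx.2
      by_cases h1 : ∀ φ : PHMLU A, Sat step φ.toHMLU p → Sat step φ.toHMLU x.1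
      · by_cases h2 : ∀ φ : PHMLU A, Sat step φ.toHMLU p' → Sat step φ.toHMLU x.2
        · have h3 : ¬ ∀ φ : PHMLU A, Sat step φ.toHMLU x.2 → Sat step φ.toHMLU p' := by
            intro h3; obtain ⟨φ, hφ1, hφ2⟩ := hne h1 h2; exact hφ2 (h3 φ hφ1)
          push_neg at h3
          obtain ⟨φ, hφ1, hφ2⟩ := h3
          refine ⟨⟨.top, .top, φ⟩, fun _ => ⟨trivial, trivial, hφ2, ?_⟩⟩
          rintro ⟨-, -, hn⟩; exact hn hφ1
        · push_neg at h2
          obtain ⟨φ, hφ1, hφ2⟩ := h2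
          refine ⟨⟨.top, φ, .bot⟩, fun _ => ⟨trivial, hφ1, ?_, ?_⟩⟩
          · simp [PHMLU.toHMLU, Sat]
          · rintro ⟨-, hn, -⟩; exact hφ2 hn
      · push_neg at h1
        obtain ⟨φ, hφ1, hφ2⟩ := h1
        refine ⟨⟨φ, .top, .bot⟩, fun _ => ⟨hφ1, trivial, ?_, ?_⟩⟩
        · simp [PHMLU.toHMLU, Sat]
        · rintro ⟨hn, -, -⟩; exact hφ2 hn
    · exact ⟨⟨.top, .top, .top⟩, fun hc => absurd hc hx⟩
  choose F hF using key
  set S : Set (X × X) :=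
    {x : X × X | Relation.ReflTransGen (step none) q x.1 ∧ step α x.1 x.2} with hSdef
  have hSfin : S.Finite := hfin α q
  set L : List (X × X) := hSfin.toFinset.toList with hLdef
  have memL : ∀ x : X × X, x ∈ L ↔ x ∈ S := by
    intro x; rw [hLdef, Finset.mem_toList, Set.Finite.mem_toFinset]
  set δ : PHMLU A := conjL (L.map fun x => (F x).1) with hδ
  set ψp : PHMLU A := conjL (L.map fun x => (F x).2.1) with hψp
  set ψn : PHMLU A := disjL (L.map fun x => (F x).2.2) with hψn
  have hδp : Sat step δ.toHMLU p := by
    rw [hδ, sat_conjL]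
    rintro φ hφ
    simp only [List.mem_map] at hφ
    obtain ⟨x, hx, rfl⟩ := hφ
    exact (hF x ((memL x).1 hx)).1
  have hψpp : Sat step ψp.toHMLU p' := by
    rw [hψp, sat_conjL]
    rintro φ hφ
    simp only [List.mem_map] at hφ
    obtain ⟨x, hx, rfl⟩ := hφ
    exact (hF x ((memL x).1 hx)).2.1
  have hψnp : ¬ Sat step ψn.toHMLU p' := by
    rw [hψn, sat_disjL]
    rintro ⟨φ, hφ, hsat⟩
    simp only [List.mem_map] at hφ
    obtain ⟨x, hx, rfl⟩ := hφ
    exact (hF x ((memL x).1 hx)).2.2.1 hsat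
  have hΦp : Sat step (PHMLU.dia δ α ψp ψn).toHMLU p := by
    refine ⟨p, p', hδp, Relation.ReflTransGen.refl, hstep, hψpp, hψnp⟩
  have hΦq := hR (PHMLU.dia δ α ψp ψn) hΦp
  obtain ⟨q', q'', hδq, hpath, hstepq, hψpq, hψnq⟩ := hΦq
  have hxS : (q', q'') ∈ S := ⟨Relation.ReflTransGen.mono (fun a b hab => hab.1) _ _ hpath, hstepq⟩
  have hδq' : Sat step δ.toHMLU q' := last_sat hpath hδq
  have hFx := hF (q', q'') hxS
  refine hFx.2.2.2 ⟨?_, ?_, ?_⟩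
  · have := (sat_conjL step _ q').1 (hδ ▸ hδq')
    exact this _ (List.mem_map.2 ⟨(q', q''), (memL _).2 hxS, rfl⟩)
  · have := (sat_conjL step _ q'').1 (hψp ▸ hψpq)
    exact this _ (List.mem_map.2 ⟨(q', q''), (memL _).2 hxS, rfl⟩)
  · intro hn
    exact hψnq ((sat_disjL step _ q'').2 ⟨_, List.mem_map.2 ⟨(q', q''), (memL _).2 hxS, rfl⟩, hn⟩)
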